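/- Let A ∈ ℝ^{n×n}, B ∈ ℝ^{n×m}, and let U ∈ ℝ^{m×T}, X₀ ∈ ℝ^{n×T}, X₁ ∈ ℝ^{n×T} satisfy X₁ = A X₀ + B U. If G ∈ ℝ^{T×n} satisfies U G = K and X₀ G = I_n for some K ∈ ℝ^{m×n}, then A + B K = X₁ G. -/
import Mathlib

open Matrix

/-- Data-driven parametrization of the closed loop: if `X₁ = A X₀ + B U`,
`U G = K` and `X₀ G = I`, then `A + B K = X₁ G`. -/
theorem closed_loop_data_param (n m T : ℕ)
    (A : Matrix (Fin n) (Fin n) ℝ) (B : Matrix (Fin n) (Fin m) ℝ)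
    (U : Matrix (Fin m) (Fin T) ℝ) (X₀ X₁ : Matrix (Fin n) (Fin T) ℝ)
    (hdata : X₁ = A * X₀ + B * U)
    (G : Matrix (Fin T) (Fin n) ℝ) (K : Matrix (Fin m) (Fin n) ℝ)
    (hUG : U * G = K) (hXG : X₀ * G = 1) :
    A + B * K = X₁ * G := by
  subst hdata hUG
  rw [Matrix.add_mul, Matrix.mul_assoc, Matrix.mul_assoc, hXG, Matrix.mul_one]
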